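/- Let M be a matroid on ground set X whose elements can be partitioned into α independent sets T_1, …, T_α, and let S_1, …, S_{α+B} be disjoint independent sets of M covering a subset of X that omits a nonempty set U. Restrict to a set Y ⊆ X with U ⊆ Y, setting T_i' = T_i ∩ Y and S_j' = S_j ∩ Y. Then the number of pairs (j, x) with x ∈ Y \ S_j' and S_j' ∪ {x} independent is strictly greater than B·|Y|. -/
import Mathlib


open scoped Classical

structure FinMatroid (α : Type*) [DecidableEq α] where
  E : Finset α
  Indep : Finset α → Prop
  indep_empty : Indep ∅
  subset_ground : ∀ ⦃I⦄, Indep I → I ⊆ E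
  indep_mono : ∀ ⦃I J⦄, Indep J → I ⊆ J → Indep I
  indep_exchange : ∀ ⦃I J⦄, Indep I → Indep J → I.card < J.card →
      ∃ x ∈ J \ I, Indep (insert x I)

/-- A circuit is an inclusion-minimal dependent set (contained in the ground set). -/
def FinMatroid.Circuit {α : Type*} [DecidableEq α] (M : FinMatroid α) (C : Finset α) : Prop :=
  C ⊆ M.E ∧ ¬ M.Indep C ∧ ∀ D ⊂ C, M.Indep D

lemma card_le_of_no_exchange {α : Type*} [DecidableEq α] (M : FinMatroid α) {I J : Finset α}
    (hI : M.Indep I) (hJ : M.Indep J)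
    (h : ∀ x ∈ J, x ∉ I → ¬ M.Indep (insert x I)) : J.card ≤ I.card := by
  by_contra h'
  push_neg at h'
  obtain ⟨x, hx, hxi⟩ := M.indep_exchange hI hJ h'
  rw [Finset.mem_sdiff] at hx
  exact h x hx.1 hx.2 hxi

/-- The cut-counting lemma: if the ground set partitions into `a` independent sets
`T i`, the `S j` (`j < a + b`) are disjoint independent color classes leaving a
nonempty set of uncolored elements, and `Y` contains all uncolored elements, then the
number of pairs `(j, x)` with `x ∈ Y \ S j` and `(S j ∩ Y) ∪ {x}` independent exceeds
`b * |Y|`. -/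
theorem stmt_6 {α : Type*} [DecidableEq α] (M : FinMatroid α) (a b : ℕ)
    (T : Fin a → Finset α) (S : Fin (a + b) → Finset α) (Y : Finset α)
    (hT : ∀ i, M.Indep (T i)) (hTdisj : ∀ i j, i ≠ j → Disjoint (T i) (T j))
    (hTcov : Finset.univ.biUnion T = M.E)
    (hS : ∀ j, M.Indep (S j)) (hSdisj : ∀ i j, i ≠ j → Disjoint (S i) (S j))
    (hU : (M.E \ Finset.univ.biUnion S).Nonempty)
    (hUY : M.E \ Finset.univ.biUnion S ⊆ Y) (hY : Y ⊆ M.E) :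
    b * Y.card <
      ∑ j : Fin (a + b), ((Y \ S j).filter fun x => M.Indep (insert x (S j ∩ Y))).card := by
  -- notation
  set c : Fin (a + b) → ℕ :=
    fun j => ((Y \ S j).filter fun x => M.Indep (insert x (S j ∩ Y))).card with hc
  -- per-color bound : Y.card ≤ c j + a * (S j ∩ Y).card
  have key : ∀ j, Y.card ≤ c j + a * (S j ∩ Y).card := by
    intro j
    set I : Finset α := S j ∩ Y with hI
    have hIindep : M.Indep I := M.indep_mono (hS j) Finset.inter_subset_left
    set D : Finset α := Y.filter (fun x => ¬ M.Indep (insert x I)) with hD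
    -- I and D are disjoint
    have hIDdisj : Disjoint I D := by
      rw [Finset.disjoint_left]
      intro x hxI hxD
      have : insert x I = I := Finset.insert_eq_self.2 hxI
      have := (Finset.mem_filter.1 hxD).2
      rw [Finset.insert_eq_self.2 hxI] at this
      exact this hIindep
    -- the "closure" bound : (I ∪ D).card ≤ a * I.card
    have hcl : I.card + D.card ≤ a * I.card := by
      have hsub : I ∪ D ⊆ Finset.univ.biUnion T := by
        rw [hTcov]
        intro x hx
        rcases Finset.mem_union.1 hx with h | h
        · exact hY (Finset.mem_inter.1 h).2
        · exact hY (Finset.mem_filter.1 h).1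
      have hdecomp : I ∪ D = Finset.univ.biUnion (fun i => T i ∩ (I ∪ D)) := by
        ext x
        simp only [Finset.mem_biUnion, Finset.mem_inter, Finset.mem_univ, true_and]
        constructor
        · intro hx
          obtain ⟨i, _, hi⟩ := Finset.mem_biUnion.1 (hsub hx)
          exact ⟨i, hi, hx⟩
        · rintro ⟨i, _, hx⟩; exact hx
      have hcard : (I ∪ D).card = ∑ i : Fin a, (T i ∩ (I ∪ D)).card := by
        conv_lhs => rw [hdecomp]
        exact Finset.card_biUnion (fun i _ j _ hij =>
          Finset.disjoint_of_subset_left Finset.inter_subset_left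
            (Finset.disjoint_of_subset_right Finset.inter_subset_left (hTdisj i j hij)))
      have hbound : ∀ i : Fin a, (T i ∩ (I ∪ D)).card ≤ I.card := by
        intro i
        refine card_le_of_no_exchange M hIindep
          (M.indep_mono (hT i) Finset.inter_subset_left) ?_
        intro x hx hxI
        have hx2 := (Finset.mem_inter.1 hx).2
        rcases Finset.mem_union.1 hx2 with h | h
        · exact absurd h hxI
        · exact (Finset.mem_filter.1 h).2
      calc I.card + D.card = (I ∪ D).card := (Finset.card_union_of_disjoint hIDdisj).symm
        _ = ∑ i : Fin a, (T i ∩ (I ∪ D)).card := hcard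
        _ ≤ ∑ _i : Fin a, I.card := Finset.sum_le_sum (fun i _ => hbound i)
        _ = a * I.card := by simp [Finset.sum_const, mul_comm]
    -- partition of Y
    have hYsplit : c j + D.card + I.card = Y.card := by
      have hDeq : (Y \ S j).filter (fun x => ¬ M.Indep (insert x I)) = D := by
        ext x
        simp only [hD, Finset.mem_filter, Finset.mem_sdiff]
        constructor
        · rintro ⟨⟨hxY, _⟩, hdep⟩; exact ⟨hxY, hdep⟩
        · rintro ⟨hxY, hdep⟩
          refine ⟨⟨hxY, fun hxS => ?_⟩, hdep⟩
          have hxI : x ∈ I := Finset.mem_inter.2 ⟨hxS, hxY⟩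
          rw [Finset.insert_eq_self.2 hxI] at hdep
          exact hdep hIindep
      have h1 : c j + D.card = (Y \ S j).card := by
        rw [← hDeq]
        exact Finset.card_filter_add_card_filter_not _
      have h2 : (Y \ S j).card + I.card = Y.card := by
        rw [hI, Finset.inter_comm]
        exact Finset.card_sdiff_add_card_inter Y (S j)
      omega
    have : Y.card = c j + D.card + I.card := hYsplit.symm
    omega
  -- sum the per-color bounds
  have hsum : (a + b) * Y.card ≤ (∑ j, c j) + a * ∑ j : Fin (a + b), (S j ∩ Y).card := by
    calc (a + b) * Y.card = ∑ _j : Fin (a + b), Y.card := by simp [Finset.sum_const, mul_comm]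
      _ ≤ ∑ j : Fin (a + b), (c j + a * (S j ∩ Y).card) := Finset.sum_le_sum (fun j _ => key j)
      _ = (∑ j, c j) + a * ∑ j : Fin (a + b), (S j ∩ Y).card := by
          rw [Finset.sum_add_distrib, Finset.mul_sum]
  -- the colored part of Y
  have hpart : (∑ j : Fin (a + b), (S j ∩ Y).card) + (Y \ Finset.univ.biUnion S).card
      = Y.card := by
    have h1 : Finset.univ.biUnion (fun j => S j ∩ Y) = Y ∩ Finset.univ.biUnion S := by
      ext x
      simp only [Finset.mem_biUnion, Finset.mem_inter, Finset.mem_univ, true_and]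
      tauto
    have h2 : (Finset.univ.biUnion (fun j => S j ∩ Y)).card
        = ∑ j : Fin (a + b), (S j ∩ Y).card :=
      Finset.card_biUnion (fun i _ j _ hij =>
        Finset.disjoint_of_subset_left Finset.inter_subset_left
          (Finset.disjoint_of_subset_right Finset.inter_subset_left (hSdisj i j hij)))
    rw [← h2, h1]
    exact Finset.card_inter_add_card_sdiff Y _
  -- nonemptiness facts
  obtain ⟨u, hu⟩ := hU
  have huY : u ∈ Y := hUY hu
  have huS : u ∉ Finset.univ.biUnion S := (Finset.mem_sdiff.1 hu).2
  have hUne : 1 ≤ (Y \ Finset.univ.biUnion S).card :=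
    Finset.card_pos.2 ⟨u, Finset.mem_sdiff.2 ⟨huY, huS⟩⟩
  have ha : 1 ≤ a := by
    have huE : u ∈ M.E := (Finset.mem_sdiff.1 hu).1
    rw [← hTcov] at huE
    obtain ⟨i, -, -⟩ := Finset.mem_biUnion.1 huE
    exact i.pos
  -- final arithmetic
  set CS := ∑ j, c j
  set SI := ∑ j : Fin (a + b), (S j ∩ Y).card
  set U := (Y \ Finset.univ.biUnion S).card
  have h3 : (a + b) * Y.card = a * SI + (a * U + b * Y.card) := by
    rw [← hpart]; ring
  nlinarith [hsum, h3, Nat.mul_le_mul ha hUne]
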